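/- Let M ∈ H_{r*+1} with constant M_{r*+1}, and let C₁,…,C_L, β₁,…,β_L satisfy ∑_ℓ C_ℓ β_ℓ^r = 0 for r = 0,…,r*. Let V₁,…,V_d be i.i.d. uniform on (-ξ,ξ), σ² = ξ²/3, h_k > 0, u ⊆ {1,…,d} nonempty. Then Var[(∑_{ℓ=1}^L C_ℓ M(x + β_ℓ h ⊙ V)) ∏_{k∈u} V_k/(h_k σ²)] ≤ 3^{|u|} M_{r*+1}² (∑_ℓ |C_ℓ β_ℓ^{r*+1}|)² ξ^{-2(|u|-r*-1)} (∏_{k∈u} h_k^{-2}) ‖h‖^{2(r*+1)}. -/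

import Mathlib

open MeasureTheory ProbabilityTheory Finset

private lemma taylor_zero_sum {d r' : ℕ} (g : (Fin d → ℕ) → ℝ) :
    ∑ p ∈ Finset.range (r' + 1), ∑ iv ∈ Finset.piAntidiag Finset.univ p,
        g iv * (∏ k : Fin d, (0:ℝ) ^ iv k) / ∏ k, (Nat.factorial (iv k) : ℝ) = g 0 := by
  rw [Finset.sum_eq_single 0]
  · simp
  · intro p hp hp0
    apply Finset.sum_eq_zero
    intro iv hiv
    rw [Finset.mem_piAntidiag] at hiv
    obtain ⟨k, hk⟩ : ∃ k, iv k ≠ 0 := by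
      by_contra hc
      push_neg at hc
      exact hp0 (by simp [← hiv.1, hc])
    have : ∏ k : Fin d, (0:ℝ) ^ iv k = 0 :=
      Finset.prod_eq_zero (Finset.mem_univ k) (zero_pow hk)
    simp [this]
  · simp

private lemma cont_of_holder {d : ℕ} (M : EuclideanSpace ℝ (Fin d) → ℝ)
    (D : (Fin d → ℕ) → EuclideanSpace ℝ (Fin d) → ℝ) (r' : ℕ) (Mr : ℝ)
    (hHolder : ∀ x y : EuclideanSpace ℝ (Fin d),
      |M x - ∑ p ∈ Finset.range (r' + 1), ∑ iv ∈ Finset.piAntidiag Finset.univ p,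
          D iv y * (∏ k, (x k - y k) ^ iv k) / ∏ k, (Nat.factorial (iv k) : ℝ)|
        ≤ Mr * ‖x - y‖ ^ (r' + 1)) : Continuous M := by
  rw [continuous_iff_continuousAt]
  intro y
  set T : EuclideanSpace ℝ (Fin d) → ℝ := fun x =>
    ∑ p ∈ Finset.range (r' + 1), ∑ iv ∈ Finset.piAntidiag Finset.univ p,
        D iv y * (∏ k, (x k - y k) ^ iv k) / ∏ k, (Nat.factorial (iv k) : ℝ) with hT
  have hTcont : Continuous T := by
    apply continuous_finset_sum
    intro p _
    apply continuous_finset_sum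
    intro iv _
    apply Continuous.div_const
    apply Continuous.mul continuous_const
    apply continuous_finset_prod
    intro k _
    exact (((continuous_apply k).comp (PiLp.continuous_ofLp 2 fun _ : Fin d => ℝ)).sub
      continuous_const).pow _
  have hTy : T y = M y := by
    have h0 := hHolder y y
    simp only [sub_self] at h0
    rw [taylor_zero_sum (fun iv => D iv y)] at h0
    have h1 : |M y - D 0 y| ≤ 0 := by simpa using h0
    have h2 : M y = D 0 y := by
      have := le_antisymm h1 (abs_nonneg _)
      rwa [abs_eq_zero, sub_eq_zero] at this
    have h3 : T y = D 0 y := by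
      rw [hT]
      have : ∀ k : Fin d, (y : EuclideanSpace ℝ (Fin d)) k - y k = 0 := fun k => sub_self _
      simp only [this]
      exact taylor_zero_sum (fun iv => D iv y)
    rw [h2, h3]
  have hrem : Filter.Tendsto (fun x => M x - T x) (nhds y) (nhds 0) := by
    apply squeeze_zero_norm (fun x => hHolder x y)
    have : Filter.Tendsto (fun x : EuclideanSpace ℝ (Fin d) => Mr * ‖x - y‖ ^ (r' + 1))
        (nhds y) (nhds (Mr * ‖(y : EuclideanSpace ℝ (Fin d)) - y‖ ^ (r' + 1))) := by
      exact (continuous_const.mul ((continuous_id.sub continuous_const).norm.pow _)).tendsto y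
    simpa using this
  have : Filter.Tendsto M (nhds y) (nhds (0 + T y)) := by
    have := hrem.add (hTcont.tendsto y)
    simpa using this
  rw [hTy, zero_add] at this
  exact this

private lemma sum_holder_bound {d : ℕ} (M : EuclideanSpace ℝ (Fin d) → ℝ)
    (D : (Fin d → ℕ) → EuclideanSpace ℝ (Fin d) → ℝ) (r' : ℕ) (Mr : ℝ)
    (hHolder : ∀ x y : EuclideanSpace ℝ (Fin d),
      |M x - ∑ p ∈ Finset.range (r' + 1), ∑ iv ∈ Finset.piAntidiag Finset.univ p,
          D iv y * (∏ k, (x k - y k) ^ iv k) / ∏ k, (Nat.factorial (iv k) : ℝ)|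
        ≤ Mr * ‖x - y‖ ^ (r' + 1))
    {L : ℕ} (C β : Fin L → ℝ)
    (hconstr : ∀ r ≤ r', ∑ ℓ, C ℓ * β ℓ ^ r = 0)
    (x w : EuclideanSpace ℝ (Fin d)) :
    |∑ ℓ, C ℓ * M (x + β ℓ • w)| ≤
      Mr * (∑ ℓ, |C ℓ * β ℓ ^ (r' + 1)|) * ‖w‖ ^ (r' + 1) := by
  set g : ℕ → ℝ := fun p => ∑ iv ∈ Finset.piAntidiag Finset.univ p,
      D iv x * (∏ k, (w k) ^ iv k) / ∏ k, (Nat.factorial (iv k) : ℝ) with hg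
  set T : Fin L → ℝ := fun ℓ =>
      ∑ p ∈ Finset.range (r' + 1), ∑ iv ∈ Finset.piAntidiag Finset.univ p,
        D iv x * (∏ k, ((x + β ℓ • w) k - x k) ^ iv k) / ∏ k, (Nat.factorial (iv k) : ℝ)
    with hTdef
  have hTeq : ∀ ℓ, T ℓ = ∑ p ∈ Finset.range (r' + 1), β ℓ ^ p * g p := by
    intro ℓ
    rw [hTdef]
    apply Finset.sum_congr rfl
    intro p hp
    rw [hg, Finset.mul_sum]
    apply Finset.sum_congr rfl
    intro iv hiv
    rw [Finset.mem_piAntidiag] at hiv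
    have hcoord : ∀ k, ((x + β ℓ • w) k - x k) = β ℓ * w k := by
      intro k
      simp [PiLp.add_apply, PiLp.smul_apply, smul_eq_mul]
    simp_rw [hcoord]
    rw [show (∏ k, (β ℓ * w k) ^ iv k) = β ℓ ^ p * ∏ k, (w k) ^ iv k by
      simp_rw [mul_pow]
      rw [Finset.prod_mul_distrib, Finset.prod_pow_eq_pow_sum, hiv.1]]
    ring
  have hcancel : ∑ ℓ, C ℓ * T ℓ = 0 := by
    simp_rw [hTeq, Finset.mul_sum]
    rw [Finset.sum_comm]
    apply Finset.sum_eq_zero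
    intro p hp
    have : ∑ ℓ, C ℓ * (β ℓ ^ p * g p) = (∑ ℓ, C ℓ * β ℓ ^ p) * g p := by
      rw [Finset.sum_mul]; apply Finset.sum_congr rfl; intros; ring
    rw [this, hconstr p (Nat.lt_succ_iff.mp (Finset.mem_range.mp hp)), zero_mul]
  have hsplit : ∑ ℓ, C ℓ * M (x + β ℓ • w) = ∑ ℓ, C ℓ * (M (x + β ℓ • w) - T ℓ) := by
    have : ∑ ℓ, C ℓ * (M (x + β ℓ • w) - T ℓ)
        = ∑ ℓ, C ℓ * M (x + β ℓ • w) - ∑ ℓ, C ℓ * T ℓ := by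
      rw [← Finset.sum_sub_distrib]
      apply Finset.sum_congr rfl
      intros; ring
    rw [this, hcancel, sub_zero]
  rw [hsplit]
  calc |∑ ℓ, C ℓ * (M (x + β ℓ • w) - T ℓ)|
      ≤ ∑ ℓ, |C ℓ * (M (x + β ℓ • w) - T ℓ)| := Finset.abs_sum_le_sum_abs _ _
    _ ≤ ∑ ℓ, |C ℓ| * (Mr * (|β ℓ| * ‖w‖) ^ (r' + 1)) := by
        apply Finset.sum_le_sum
        intro ℓ _
        rw [abs_mul]
        apply mul_le_mul_of_nonneg_left _ (abs_nonneg _)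
        have hH := hHolder (x + β ℓ • w) x
        have hnorm : ‖(x + β ℓ • w) - x‖ = |β ℓ| * ‖w‖ := by
          rw [add_sub_cancel_left, norm_smul, Real.norm_eq_abs]
        rw [hnorm] at hH
        rw [mul_pow] at hH ⊢
        exact hH
    _ = Mr * (∑ ℓ, |C ℓ * β ℓ ^ (r' + 1)|) * ‖w‖ ^ (r' + 1) := by
        rw [Finset.mul_sum, Finset.sum_mul]
        apply Finset.sum_congr rfl
        intros ℓ _
        rw [abs_mul, abs_pow, mul_pow]
        ring

private lemma norm_coordmul_le {d : ℕ} (h : EuclideanSpace ℝ (Fin d)) (v : Fin d → ℝ)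
    (ξ : ℝ) (hξ : 0 ≤ ξ) (hv : ∀ k, |v k| ≤ ξ) :
    ‖(WithLp.equiv 2 (Fin d → ℝ)).symm (fun k => h k * v k)‖ ≤ ξ * ‖h‖ := by
  have hn : ‖(WithLp.equiv 2 (Fin d → ℝ)).symm (fun k => h k * v k)‖
      = Real.sqrt (∑ i, ‖h i * v i‖ ^ 2) := by
    rw [EuclideanSpace.norm_eq]
    rfl
  rw [hn]
  have hsum : ∑ i, ‖h i * v i‖ ^ 2 ≤ ξ ^ 2 * ∑ i, ‖h i‖ ^ 2 := by
    rw [Finset.mul_sum]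
    apply Finset.sum_le_sum
    intro i _
    rw [Real.norm_eq_abs, Real.norm_eq_abs, abs_mul, mul_pow]
    have := hv i
    have h1 : |v i| ^ 2 ≤ ξ ^ 2 := pow_le_pow_left₀ (abs_nonneg _) this 2
    calc |h i| ^ 2 * |v i| ^ 2 ≤ |h i| ^ 2 * ξ ^ 2 :=
          mul_le_mul_of_nonneg_left h1 (sq_nonneg _)
      _ = ξ ^ 2 * |h i| ^ 2 := by ring
  calc Real.sqrt (∑ i, ‖h i * v i‖ ^ 2) ≤ Real.sqrt (ξ ^ 2 * ∑ i, ‖h i‖ ^ 2) :=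
        Real.sqrt_le_sqrt hsum
    _ = ξ * ‖h‖ := by
        rw [Real.sqrt_mul (sq_nonneg ξ), Real.sqrt_sq hξ, EuclideanSpace.norm_eq]

private lemma ae_abs_le_of_unif {Ω : Type*} [MeasurableSpace Ω] (μ : Measure Ω)
    (ξ : ℝ) (f : Ω → ℝ) (hf : Measurable f)
    (hmap : Measure.map f μ = (ENNReal.ofReal (2 * ξ))⁻¹ • volume.restrict (Set.Ioo (-ξ) ξ)) :
    ∀ᵐ ω ∂μ, |f ω| ≤ ξ := by
  have h0 : μ (f ⁻¹' (Set.Ioo (-ξ) ξ)ᶜ) = 0 := by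
    rw [← Measure.map_apply hf measurableSet_Ioo.compl, hmap]
    simp [Measure.restrict_apply measurableSet_Ioo.compl, Set.compl_inter_self]
  have h1 : ∀ᵐ ω ∂μ, f ω ∈ Set.Ioo (-ξ) ξ := by
    rw [ae_iff]
    exact h0
  filter_upwards [h1] with ω hω
  rw [abs_le]
  exact ⟨hω.1.le, hω.2.le⟩

private lemma exp_sq_uniform {Ω : Type*} [MeasurableSpace Ω] (μ : Measure Ω)
    (ξ : ℝ) (hξ : 0 < ξ) (f : Ω → ℝ) (hf : Measurable f)
    (hmap : Measure.map f μ = (ENNReal.ofReal (2 * ξ))⁻¹ • volume.restrict (Set.Ioo (-ξ) ξ)) :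
    ∫ ω, (f ω) ^ 2 ∂μ = ξ ^ 2 / 3 := by
  have h1 : ∫ ω, (f ω) ^ 2 ∂μ = ∫ y, y ^ 2 ∂(Measure.map f μ) :=
    (integral_map hf.aemeasurable (continuous_pow 2).aestronglyMeasurable).symm
  rw [h1, hmap, integral_smul_measure]
  have h2 : ∫ y in Set.Ioo (-ξ) ξ, y ^ 2 = 2 * ξ ^ 3 / 3 := by
    rw [← integral_Ioc_eq_integral_Ioo, ← intervalIntegral.integral_of_le (by linarith)]
    rw [_root_.integral_pow]
    ring
  rw [h2, ENNReal.toReal_inv, ENNReal.toReal_ofReal (by positivity), smul_eq_mul]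
  field_simp

private lemma exp_prod_sq {Ω : Type*} [MeasurableSpace Ω] (μ : Measure Ω)
    [IsProbabilityMeasure μ] {d : ℕ} (V : Fin d → Ω → ℝ)
    (hVmeas : ∀ j, Measurable (V j))
    (hindep : iIndepFun V μ)
    (hint : ∀ k, Integrable (fun ω => (V k ω) ^ 2) μ)
    (hintp : ∀ s : Finset (Fin d), Integrable (fun ω => ∏ k ∈ s, (V k ω) ^ 2) μ)
    (s : Finset (Fin d)) :
    ∫ ω, ∏ k ∈ s, (V k ω) ^ 2 ∂μ = ∏ k ∈ s, ∫ ω, (V k ω) ^ 2 ∂μ := by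
  classical
  induction s using Finset.cons_induction with
  | empty => simp
  | cons a s ha ih =>
    have hsqindep : iIndepFun
        (fun k => (fun y : ℝ => y ^ 2) ∘ V k) μ :=
      hindep.comp _ (fun _ => measurable_id.pow_const 2)
    have hIF : IndepFun (∏ j ∈ s, (fun y : ℝ => y ^ 2) ∘ V j)
        ((fun y : ℝ => y ^ 2) ∘ V a) μ :=
      hsqindep.indepFun_finsetProd_of_notMem
        (fun k => (hVmeas k).pow_const 2) ha
    have key := hIF.symm.integral_mul_eq_mul_integral (hint a).aestronglyMeasurable (Integrable.aestronglyMeasurable <| by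
      have := hintp s
      convert this using 1
      funext ω
      simp [Finset.prod_apply])
    simp only [Finset.prod_cons]
    rw [← ih]
    have e1 : ∫ ω, (V a ω) ^ 2 * ∏ k ∈ s, (V k ω) ^ 2 ∂μ
        = ∫ ω, ((fun y : ℝ => y ^ 2) ∘ V a * ∏ j ∈ s, (fun y : ℝ => y ^ 2) ∘ V j) ω ∂μ := by
      congr 1
      funext ω
      simp [Finset.prod_apply]
    rw [e1, key]
    congr 1
    congr 1
    funext ω
    simp [Finset.prod_apply]


/-- Variance bound for the randomized cross-partial-derivative estimator kernel: if `M`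
lies in the Hölder class `H_{r*+1}`, the coefficients annihilate all powers `β^r` for
`r = 0,…,r*`, and `V₁,…,V_d` are i.i.d. uniform on `(-ξ,ξ)` (so `σ² = ξ²/3`), then
`Var[(∑_ℓ C_ℓ M(x + β_ℓ h⊙V)) ∏_{k∈u} V_k/(h_k σ²)]
  ≤ 3^{|u|} M_{r*+1}² (∑_ℓ |C_ℓ β_ℓ^{r*+1}|)² ξ^{-2(|u|-r*-1)} (∏_{k∈u} h_k⁻²)
    ‖h‖^{2(r*+1)}`. -/
theorem variance_bound_uniform
    {Ω : Type*} [MeasurableSpace Ω] (μ : Measure Ω) [IsProbabilityMeasure μ]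
    {d : ℕ} (M : EuclideanSpace ℝ (Fin d) → ℝ)
    (D : (Fin d → ℕ) → EuclideanSpace ℝ (Fin d) → ℝ)
    (r' : ℕ) (Mr : ℝ)
    (hHolder : ∀ x y : EuclideanSpace ℝ (Fin d),
      |M x - ∑ p ∈ Finset.range (r' + 1), ∑ iv ∈ Finset.piAntidiag Finset.univ p,
          D iv y * (∏ k, (x k - y k) ^ iv k) / ∏ k, (Nat.factorial (iv k) : ℝ)|
        ≤ Mr * ‖x - y‖ ^ (r' + 1))
    {L : ℕ} (C β : Fin L → ℝ)
    (hconstr : ∀ r ≤ r', ∑ ℓ, C ℓ * β ℓ ^ r = 0)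
    (ξ : ℝ) (hξ : 0 < ξ) (V : Fin d → Ω → ℝ)
    (hVmeas : ∀ j, Measurable (V j))
    (hindep : iIndepFun V μ)
    (hunif : ∀ j, Measure.map (V j) μ =
      (ENNReal.ofReal (2 * ξ))⁻¹ • volume.restrict (Set.Ioo (-ξ) ξ))
    (h : EuclideanSpace ℝ (Fin d)) (hh : ∀ k, 0 < h k)
    (u : Finset (Fin d)) (hu : u.Nonempty)
    (x : EuclideanSpace ℝ (Fin d)) :
    variance (fun ω =>
        (∑ ℓ, C ℓ * M (x + β ℓ • (WithLp.equiv 2 (Fin d → ℝ)).symm fun k => h k * V k ω))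
          * ∏ k ∈ u, V k ω / (h k * (ξ ^ 2 / 3))) μ
      ≤ (3 : ℝ) ^ u.card * Mr ^ 2 * (∑ ℓ, |C ℓ * β ℓ ^ (r' + 1)|) ^ 2
        * ξ ^ (-(2 * ((u.card : ℤ) - r' - 1)))
        * (∏ k ∈ u, (h k) ^ (-2 : ℤ)) * ‖h‖ ^ (2 * (r' + 1)) := by
  classical
  set X : Ω → ℝ := fun ω =>
    (∑ ℓ, C ℓ * M (x + β ℓ • (WithLp.equiv 2 (Fin d → ℝ)).symm fun k => h k * V k ω))
      * ∏ k ∈ u, V k ω / (h k * (ξ ^ 2 / 3)) with hX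
  set A : ℝ := ∑ ℓ, |C ℓ * β ℓ ^ (r' + 1)| with hA
  have hA0 : 0 ≤ A := Finset.sum_nonneg fun _ _ => abs_nonneg _
  -- Mr is nonnegative
  have hMr : 0 ≤ Mr := by
    obtain ⟨k₀, _⟩ := hu
    have h1 := (abs_nonneg _).trans (hHolder (x + EuclideanSpace.single k₀ (1:ℝ)) x)
    rw [add_sub_cancel_left, EuclideanSpace.norm_single] at h1
    simpa using h1
  have hK0 : 0 ≤ Mr * A := mul_nonneg hMr hA0
  -- a.e. bound on V
  have hb_all : ∀ᵐ ω ∂μ, ∀ k, |V k ω| ≤ ξ :=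
    ae_all_iff.2 fun k => ae_abs_le_of_unif μ ξ (V k) (hVmeas k) (hunif k)
  -- integrability
  have hint_sq : ∀ k, Integrable (fun ω => (V k ω) ^ 2) μ := by
    intro k
    refine ⟨((hVmeas k).pow_const 2).aestronglyMeasurable,
      HasFiniteIntegral.of_bounded (C := ξ ^ 2) ?_⟩
    filter_upwards [hb_all] with ω hω
    rw [Real.norm_eq_abs, abs_pow]
    exact pow_le_pow_left₀ (abs_nonneg _) (hω k) 2
  have hint_prod : ∀ s : Finset (Fin d), Integrable (fun ω => ∏ k ∈ s, (V k ω) ^ 2) μ := by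
    intro s
    refine ⟨(Finset.measurable_prod s fun k _ =>
        (hVmeas k).pow_const 2).aestronglyMeasurable,
      HasFiniteIntegral.of_bounded (C := (ξ ^ 2) ^ s.card) ?_⟩
    filter_upwards [hb_all] with ω hω
    rw [Real.norm_eq_abs, Finset.abs_prod, ← Finset.prod_const]
    apply Finset.prod_le_prod (fun k _ => abs_nonneg _)
    intro k _
    rw [abs_pow]
    exact pow_le_pow_left₀ (abs_nonneg _) (hω k) 2
  -- measurability of X
  have hMcont : Continuous M := cont_of_holder M D r' Mr hHolder
  have hXmeas : AEStronglyMeasurable X μ := by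
    have hF : Continuous (fun v : Fin d → ℝ =>
        (∑ ℓ, C ℓ * M (x + β ℓ • (WithLp.equiv 2 (Fin d → ℝ)).symm fun k => h k * v k))
          * ∏ k ∈ u, v k / (h k * (ξ ^ 2 / 3))) := by
      apply Continuous.mul
      · apply continuous_finset_sum
        intro ℓ _
        apply continuous_const.mul
        apply hMcont.comp
        apply continuous_const.add
        refine Continuous.const_smul (c := β ℓ)
          (g := fun a : Fin d → ℝ => (WithLp.equiv 2 (Fin d → ℝ)).symm fun k => h k * a k) ?_
        exact (PiLp.continuous_toLp 2 fun _ : Fin d => ℝ).comp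
          (continuous_pi fun k => continuous_const.mul (continuous_apply k))
      · apply continuous_finset_prod
        intro k _
        exact (continuous_apply k).div_const _
    exact (hF.measurable.comp (measurable_pi_lambda _ hVmeas)).aestronglyMeasurable
  -- pointwise bound constant
  set c2 : ℝ := (Mr * A) ^ 2 * (ξ * ‖h‖) ^ (2 * (r' + 1))
      * ∏ k ∈ u, ((h k * (ξ ^ 2 / 3))⁻¹) ^ 2 with hc2
  have hptwise : ∀ᵐ ω ∂μ, (X ω) ^ 2 ≤ c2 * ∏ k ∈ u, (V k ω) ^ 2 := by
    filter_upwards [hb_all] with ω hω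
    set w : EuclideanSpace ℝ (Fin d) :=
      (WithLp.equiv 2 (Fin d → ℝ)).symm fun k => h k * V k ω with hw
    have hS : |∑ ℓ, C ℓ * M (x + β ℓ • w)| ≤ Mr * A * ‖w‖ ^ (r' + 1) :=
      sum_holder_bound M D r' Mr hHolder C β hconstr x w
    have hwn : ‖w‖ ≤ ξ * ‖h‖ := norm_coordmul_le h (fun k => V k ω) ξ hξ.le hω
    have hS2 : |∑ ℓ, C ℓ * M (x + β ℓ • w)| ≤ Mr * A * (ξ * ‖h‖) ^ (r' + 1) :=
      hS.trans (mul_le_mul_of_nonneg_left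
        (pow_le_pow_left₀ (norm_nonneg _) hwn _) hK0)
    have hP : (∏ k ∈ u, V k ω / (h k * (ξ ^ 2 / 3))) ^ 2
        = (∏ k ∈ u, (V k ω) ^ 2) * ∏ k ∈ u, ((h k * (ξ ^ 2 / 3))⁻¹) ^ 2 := by
      rw [← Finset.prod_pow, ← Finset.prod_mul_distrib]
      apply Finset.prod_congr rfl
      intro k _
      rw [div_eq_mul_inv, mul_pow]
    have hXsq : (X ω) ^ 2 = |∑ ℓ, C ℓ * M (x + β ℓ • w)| ^ 2
        * (∏ k ∈ u, V k ω / (h k * (ξ ^ 2 / 3))) ^ 2 := by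
      rw [hX, mul_pow, sq_abs]
    rw [hXsq, hP]
    have hb2 : |∑ ℓ, C ℓ * M (x + β ℓ • w)| ^ 2
        ≤ (Mr * A * (ξ * ‖h‖) ^ (r' + 1)) ^ 2 :=
      pow_le_pow_left₀ (abs_nonneg _) hS2 2
    calc |∑ ℓ, C ℓ * M (x + β ℓ • w)| ^ 2
          * ((∏ k ∈ u, (V k ω) ^ 2) * ∏ k ∈ u, ((h k * (ξ ^ 2 / 3))⁻¹) ^ 2)
        ≤ (Mr * A * (ξ * ‖h‖) ^ (r' + 1)) ^ 2
          * ((∏ k ∈ u, (V k ω) ^ 2) * ∏ k ∈ u, ((h k * (ξ ^ 2 / 3))⁻¹) ^ 2) := by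
          apply mul_le_mul_of_nonneg_right hb2
          apply mul_nonneg (Finset.prod_nonneg fun k _ => sq_nonneg _)
            (Finset.prod_nonneg fun k _ => sq_nonneg _)
      _ = c2 * ∏ k ∈ u, (V k ω) ^ 2 := by
          rw [hc2]
          rw [mul_pow (Mr * A), ← pow_mul]
          ring
  -- assemble
  have hexp_sq : ∀ k, ∫ ω, (V k ω) ^ 2 ∂μ = ξ ^ 2 / 3 := fun k =>
    exp_sq_uniform μ ξ hξ (V k) (hVmeas k) (hunif k)
  have step1 : variance X μ ≤ μ[X ^ 2] := variance_le_expectation_sq hXmeas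
  have step2 : μ[X ^ 2] = ∫ ω, (X ω) ^ 2 ∂μ := by
    congr 1
  have step3 : ∫ ω, (X ω) ^ 2 ∂μ ≤ ∫ ω, c2 * ∏ k ∈ u, (V k ω) ^ 2 ∂μ :=
    integral_mono_of_nonneg (Filter.Eventually.of_forall fun ω => sq_nonneg _)
      ((hint_prod u).const_mul c2) hptwise
  have step4 : ∫ ω, c2 * ∏ k ∈ u, (V k ω) ^ 2 ∂μ = c2 * (ξ ^ 2 / 3) ^ u.card := by
    rw [integral_const_mul, exp_prod_sq μ V hVmeas hindep hint_sq hint_prod u]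
    congr 1
    rw [← Finset.prod_const]
    exact Finset.prod_congr rfl fun k _ => hexp_sq k
  have halg : c2 * (ξ ^ 2 / 3) ^ u.card
      = (3 : ℝ) ^ u.card * Mr ^ 2 * A ^ 2
        * ξ ^ (-(2 * ((u.card : ℤ) - r' - 1)))
        * (∏ k ∈ u, (h k) ^ (-2 : ℤ)) * ‖h‖ ^ (2 * (r' + 1)) := by
    have hξne : ξ ≠ 0 := hξ.ne'
    have eZ : ξ ^ (-(2 * ((u.card : ℤ) - r' - 1)))
        = ξ ^ (2 * (r' + 1)) * (ξ ^ (2 * u.card))⁻¹ := by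
      rw [show (-(2 * ((u.card : ℤ) - r' - 1)))
          = ((2 * (r' + 1) : ℕ) : ℤ) - ((2 * u.card : ℕ) : ℤ) by push_cast; ring]
      rw [zpow_sub₀ hξne, zpow_natCast, zpow_natCast, div_eq_mul_inv]
    have emerge : (∏ k ∈ u, ((h k * (ξ ^ 2 / 3))⁻¹) ^ 2) * (ξ ^ 2 / 3) ^ u.card
        = (∏ k ∈ u, (h k) ^ (-2 : ℤ)) * (3 * (ξ ^ 2)⁻¹) ^ u.card := by
      rw [← Finset.prod_const (ξ ^ 2 / 3), ← Finset.prod_mul_distrib,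
          ← Finset.prod_const (3 * (ξ ^ 2)⁻¹), ← Finset.prod_mul_distrib]
      apply Finset.prod_congr rfl
      intro k _
      have hk0 : h k ≠ 0 := (hh k).ne'
      rw [show ((-2:ℤ)) = -((2:ℕ):ℤ) by norm_num, zpow_neg, zpow_natCast]
      field_simp
    have e3 : ((3 : ℝ) * (ξ ^ 2)⁻¹) ^ u.card = 3 ^ u.card * (ξ ^ (2 * u.card))⁻¹ := by
      rw [mul_pow, inv_pow, ← pow_mul]
    rw [hc2, mul_assoc ((Mr * A) ^ 2 * (ξ * ‖h‖) ^ (2 * (r' + 1))), emerge, eZ, e3,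
      mul_pow ξ ‖h‖, mul_pow Mr A]
    ring
  calc variance X μ ≤ μ[X ^ 2] := step1
    _ = ∫ ω, (X ω) ^ 2 ∂μ := step2
    _ ≤ ∫ ω, c2 * ∏ k ∈ u, (V k ω) ^ 2 ∂μ := step3
    _ = c2 * (ξ ^ 2 / 3) ^ u.card := step4
    _ = _ := halg
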